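/- arXiv:2512.00213 — 6 statements merged into one kernel-verified Lean document; each statement's English description precedes it below -/
import Mathlib

section
/- Let X be a measurable space with a measure λ and let φ : X × X → [0,1] be measurable and symmetric. For a finite set S ⊆ X and x ∈ X put φ̄(S,x) := ∏_{y∈S}(1−φ(x,y)) (with φ̄(∅,x)=1), and for finite sets S,T ⊆ X define K(S,T) := ∫ φ̄(S,x)·(1−φ̄(T,x)) λ(dx), an integral of a nonnegative measurable function valued in [0,∞]. Then for every n ∈ ℕ and all pairwise disjoint finite sets S₀, S₁, …, Sₙ ⊆ X: K(∅,S₀) + K(S₀,S₁) + K(S₀∪S₁,S₂) + ⋯ + K(S₀∪⋯∪S_{n−1},Sₙ) = K(∅, S₀∪⋯∪Sₙ). -/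
open MeasureTheory
open scoped ENNReal

/-- `phibar φ S x = ∏_{y ∈ S} (1 - φ x y)`: the probability that `x` is not connected
to any point of the finite set `S`. -/
noncomputable def phibar {X : Type*} (φ : X → X → ℝ) (S : Finset X) (x : X) : ℝ :=
  ∏ y ∈ S, (1 - φ x y)

/-- The total intensity kernel of the random connection model:
`K(S,T) = ∫ φ̄(S,x) (1 - φ̄(T,x)) λ(dx)`. -/
noncomputable def Kker {X : Type*} [MeasurableSpace X] (μ : Measure X)
    (φ : X → X → ℝ) (S T : Finset X) : ℝ≥0∞ :=
  ∫⁻ x, ENNReal.ofReal (phibar φ S x * (1 - phibar φ T x)) ∂μ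

lemma phibar_nonneg {X : Type*} {φ : X → X → ℝ}
    (h01 : ∀ x y, φ x y ∈ Set.Icc (0 : ℝ) 1) (S : Finset X) (x : X) :
    0 ≤ phibar φ S x :=
  Finset.prod_nonneg fun y _ => by
    have := h01 x y; simp only [Set.mem_Icc] at this; linarith

lemma phibar_le_one {X : Type*} {φ : X → X → ℝ}
    (h01 : ∀ x y, φ x y ∈ Set.Icc (0 : ℝ) 1) (S : Finset X) (x : X) :
    phibar φ S x ≤ 1 :=
  Finset.prod_le_one
    (fun y _ => by have := h01 x y; simp only [Set.mem_Icc] at this; linarith)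
    (fun y _ => by have := h01 x y; simp only [Set.mem_Icc] at this; linarith)

lemma phibar_union {X : Type*} [DecidableEq X] {φ : X → X → ℝ} {A B : Finset X}
    (h : Disjoint A B) (x : X) :
    phibar φ (A ∪ B) x = phibar φ A x * phibar φ B x :=
  Finset.prod_union h

lemma phibar_measurable {X : Type*} [MeasurableSpace X] {φ : X → X → ℝ}
    (hmeas : Measurable (Function.uncurry φ)) (S : Finset X) :
    Measurable (phibar φ S) :=
  Finset.measurable_prod _ fun y _ =>
    measurable_const.sub (hmeas.comp (measurable_id.prodMk measurable_const))

/-- Auxiliary: union of the first `k` sets. -/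
noncomputable def Bfun {X : Type*} [DecidableEq X] (n : ℕ) (S : Fin (n + 1) → Finset X)
    (k : ℕ) : Finset X :=
  (Finset.univ.filter fun j : Fin (n + 1) => (j : ℕ) < k).biUnion S

/-- Additivity of the kernel `K`: for pairwise disjoint finite sets `S₀, …, Sₙ`,
`K(∅,S₀) + K(S₀,S₁) + ⋯ + K(S₀ ∪ ⋯ ∪ S_{n-1}, Sₙ) = K(∅, S₀ ∪ ⋯ ∪ Sₙ)`. -/
theorem stmt2 {X : Type*} [MeasurableSpace X] [DecidableEq X] (μ : Measure X)
    (φ : X → X → ℝ) (hmeas : Measurable (Function.uncurry φ))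
    (hsym : ∀ x y, φ x y = φ y x)
    (h01 : ∀ x y, φ x y ∈ Set.Icc (0 : ℝ) 1)
    (n : ℕ) (S : Fin (n + 1) → Finset X)
    (hdisj : ∀ i j, i ≠ j → Disjoint (S i) (S j)) :
    ∑ i : Fin (n + 1), Kker μ φ ((Finset.Iio i).biUnion S) (S i)
      = Kker μ φ ∅ (Finset.univ.biUnion S) := by
  classical
  have hBi : ∀ i : Fin (n + 1), (Finset.Iio i).biUnion S = Bfun n S (i : ℕ) := by
    intro i
    unfold Bfun
    congr 1
    ext j
    simp only [Finset.mem_Iio, Finset.mem_filter, Finset.mem_univ, true_and, Fin.lt_def]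
  have hBsucc : ∀ i : Fin (n + 1), Bfun n S ((i : ℕ) + 1) = Bfun n S (i : ℕ) ∪ S i := by
    intro i
    unfold Bfun
    ext z
    simp only [Finset.mem_biUnion, Finset.mem_filter, Finset.mem_union,
      Nat.lt_succ_iff_lt_or_eq, Finset.mem_univ, true_and]
    constructor
    · rintro ⟨j, hj | hj, hz⟩
      · exact Or.inl ⟨j, hj, hz⟩
      · exact Or.inr (by rwa [show j = i from Fin.ext hj] at hz)
    · rintro (⟨j, hj, hz⟩ | hz)
      · exact ⟨j, Or.inl hj, hz⟩
      · exact ⟨i, Or.inr rfl, hz⟩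
  have hBdisj : ∀ i : Fin (n + 1), Disjoint (Bfun n S (i : ℕ)) (S i) := by
    intro i
    unfold Bfun
    rw [Finset.disjoint_biUnion_left]
    intro j hj
    simp only [Finset.mem_filter] at hj
    exact hdisj j i (fun h => by simp [h] at hj)
  have hBzero : Bfun n S 0 = ∅ := by simp [Bfun]
  have hBtop : Bfun n S (n + 1) = Finset.univ.biUnion S := by
    unfold Bfun
    congr 1
    exact Finset.filter_true_of_mem fun j _ => j.isLt
  -- pointwise key identity
  have key : ∀ x : X,
      ∑ i : Fin (n + 1), ENNReal.ofReal (phibar φ (Bfun n S (i : ℕ)) x * (1 - phibar φ (S i) x))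
        = ENNReal.ofReal (1 - phibar φ (Bfun n S (n + 1)) x) := by
    intro x
    rw [← ENNReal.ofReal_sum_of_nonneg (fun i _ =>
      mul_nonneg (phibar_nonneg h01 _ x) (sub_nonneg.2 (phibar_le_one h01 _ x)))]
    congr 1
    have hterm : ∀ i : Fin (n + 1),
        phibar φ (Bfun n S (i : ℕ)) x * (1 - phibar φ (S i) x)
          = phibar φ (Bfun n S (i : ℕ)) x - phibar φ (Bfun n S ((i : ℕ) + 1)) x := by
      intro i
      rw [hBsucc i, phibar_union (hBdisj i)]
      ring
    calc ∑ i : Fin (n + 1), phibar φ (Bfun n S (i : ℕ)) x * (1 - phibar φ (S i) x)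
        = ∑ i : Fin (n + 1), (phibar φ (Bfun n S (i : ℕ)) x - phibar φ (Bfun n S ((i : ℕ) + 1)) x) :=
          Finset.sum_congr rfl fun i _ => hterm i
      _ = ∑ k ∈ Finset.range (n + 1), (phibar φ (Bfun n S k) x - phibar φ (Bfun n S (k + 1)) x) :=
          Fin.sum_univ_eq_sum_range
            (fun k => phibar φ (Bfun n S k) x - phibar φ (Bfun n S (k + 1)) x) (n + 1)
      _ = phibar φ (Bfun n S 0) x - phibar φ (Bfun n S (n + 1)) x := Finset.sum_range_sub' (fun k => phibar φ (Bfun n S k) x) (n + 1)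
      _ = 1 - phibar φ (Bfun n S (n + 1)) x := by simp [hBzero, phibar]
  -- assemble
  simp_rw [hBi, Kker]
  rw [← lintegral_finset_sum]
  · refine lintegral_congr fun x => ?_
    rw [key x, hBtop]
    simp [phibar]
  · intro i _
    exact ENNReal.measurable_ofReal.comp
      ((phibar_measurable hmeas _).mul
        (measurable_const.sub (phibar_measurable hmeas _)))
end

section
/- Let M be a measurable space equipped with a probability measure Q, and let d : M × M → [0,∞] be a measurable symmetric function. Define the iterated kernels by d⁽¹⁾ := d and d⁽ⁿ⁺¹⁾(p,q) := ∫ d⁽ⁿ⁾(p,r) d(r,q) Q(dr). Then for every n ≥ 1, ‖d⁽ⁿ⁾‖_{1,2} ≤ (‖d‖_{2,2})ⁿ, where ‖L‖_{1,2} := ( ∫ ( ∫ L(p,q) Q(dp) )² Q(dq) )^{1/2} and ‖L‖_{2,2} := ( ∬ L(p,q)² Q(dp) Q(dq) )^{1/2}. -/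
open MeasureTheory
open scoped ENNReal

/-- Iterated kernels: `iterK Q d n` is `d⁽ⁿ⁺¹⁾`, i.e. `iterK Q d 0 = d = d⁽¹⁾` and
`d⁽ⁿ⁺¹⁾(p,q) = ∫ d⁽ⁿ⁾(p,r) d(r,q) Q(dr)`. -/
noncomputable def iterK {M : Type*} [MeasurableSpace M] (Q : Measure M)
    (d : M → M → ℝ≥0∞) : ℕ → M → M → ℝ≥0∞
  | 0 => d
  | n + 1 => fun p q => ∫⁻ r, iterK Q d n p r * d r q ∂Q

lemma iterK_meas {M : Type*} [MeasurableSpace M] (Q : Measure M) [SFinite Q] (d : M → M → ℝ≥0∞)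
    (hmeas : Measurable (Function.uncurry d)) (n : ℕ) :
    Measurable (Function.uncurry (iterK Q d n)) := by
  induction n with
  | zero => exact hmeas
  | succ n ih =>
    have h : Measurable fun x : (M × M) × M => iterK Q d n x.1.1 x.2 * d x.2 x.1.2 :=
      (ih.comp (measurable_fst.fst.prodMk measurable_snd)).mul
        (hmeas.comp (measurable_snd.prodMk measurable_fst.snd))
    exact h.lintegral_prod_right'

lemma cs_sq {M : Type*} [MeasurableSpace M] (Q : Measure M) {f g : M → ℝ≥0∞}
    (hf : Measurable f) (hg : Measurable g) :
    (∫⁻ x, f x * g x ∂Q) ^ 2 ≤ (∫⁻ x, f x ^ 2 ∂Q) * (∫⁻ x, g x ^ 2 ∂Q) := by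
  have hpq : (2:ℝ).HolderConjugate 2 := by
    constructor <;> norm_num
  have := ENNReal.lintegral_mul_le_Lp_mul_Lq Q hpq hf.aemeasurable hg.aemeasurable
  calc (∫⁻ x, f x * g x ∂Q) ^ 2
      ≤ ((∫⁻ x, f x ^ (2:ℝ) ∂Q) ^ (1/(2:ℝ)) * (∫⁻ x, g x ^ (2:ℝ) ∂Q) ^ (1/(2:ℝ))) ^ 2 := by
        exact pow_le_pow_left' this 2
    _ = (∫⁻ x, f x ^ 2 ∂Q) * (∫⁻ x, g x ^ 2 ∂Q) := by
        rw [mul_pow, ← ENNReal.rpow_natCast (_ ^ (1/(2:ℝ))) 2,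
          ← ENNReal.rpow_natCast (_ ^ (1/(2:ℝ))) 2, ← ENNReal.rpow_mul, ← ENNReal.rpow_mul]
        have h2 : ∀ x : ℝ≥0∞, x ^ (2:ℝ) = x ^ 2 := fun x => by
          rw [← ENNReal.rpow_natCast x 2]; norm_num
        simp only [h2]
        norm_num

/-- `‖d⁽ⁿ⁾‖_{1,2} ≤ (‖d‖_{2,2})ⁿ`, where
`‖L‖_{1,2} = (∫ (∫ L(p,q) Q(dp))² Q(dq))^{1/2}` and
`‖L‖_{2,2} = (∬ L(p,q)² Q(dp) Q(dq))^{1/2}`. -/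
theorem stmt4 {M : Type*} [MeasurableSpace M] (Q : Measure M) [IsProbabilityMeasure Q]
    (d : M → M → ℝ≥0∞) (hmeas : Measurable (Function.uncurry d))
    (hsym : ∀ p q, d p q = d q p) (n : ℕ) :
    (∫⁻ q, (∫⁻ p, iterK Q d n p q ∂Q) ^ 2 ∂Q) ^ (1 / 2 : ℝ)
      ≤ ((∫⁻ q, ∫⁻ p, (d p q) ^ 2 ∂Q ∂Q) ^ (1 / 2 : ℝ)) ^ (n + 1) := by
  set A : ℝ≥0∞ := ∫⁻ q, ∫⁻ p, (d p q) ^ 2 ∂Q ∂Q with hA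
  -- F n q = ∫⁻ p, iterK n p q
  set F : ℕ → M → ℝ≥0∞ := fun n q => ∫⁻ p, iterK Q d n p q ∂Q with hF
  have hFmeas : ∀ n, Measurable (F n) := by
    intro n
    have := (iterK_meas Q d hmeas n).comp (measurable_swap (α := M) (β := M))
    exact this.lintegral_prod_right'
  have key : ∀ n, (∫⁻ q, F n q ^ 2 ∂Q) ≤ A ^ (n + 1) := by
    intro n
    induction n with
    | zero =>
      rw [pow_one]
      refine lintegral_mono fun q => ?_
      have hf : Measurable fun p => d p q :=
        hmeas.comp (measurable_id.prodMk measurable_const)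
      have := cs_sq Q hf (measurable_const : Measurable fun _ : M => (1:ℝ≥0∞))
      simpa [hF, iterK] using this
    | succ n ih =>
      have step : ∀ q, F (n+1) q = ∫⁻ r, F n r * d r q ∂Q := by
        intro q
        have hm : AEMeasurable (fun z : M × M => iterK Q d n z.1 z.2 * d z.2 q)
            (Q.prod Q) := by
          exact ((iterK_meas Q d hmeas n).mul
            ((hmeas.comp (measurable_id.prodMk measurable_const)).comp
              measurable_snd)).aemeasurable
        calc F (n+1) q = ∫⁻ p, ∫⁻ r, iterK Q d n p r * d r q ∂Q ∂Q := rfl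
          _ = ∫⁻ r, ∫⁻ p, iterK Q d n p r * d r q ∂Q ∂Q :=
              lintegral_lintegral_swap hm
          _ = ∫⁻ r, F n r * d r q ∂Q := by
              refine lintegral_congr fun r => ?_
              rw [lintegral_mul_const _]
              exact (iterK_meas Q d hmeas n).comp
                (measurable_id.prodMk measurable_const)
      calc (∫⁻ q, F (n+1) q ^ 2 ∂Q)
          ≤ ∫⁻ q, (∫⁻ r, F n r ^ 2 ∂Q) * (∫⁻ r, d r q ^ 2 ∂Q) ∂Q := by
            refine lintegral_mono fun q => ?_
            rw [step q]
            exact cs_sq Q (hFmeas n)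
              (hmeas.comp (measurable_id.prodMk measurable_const))
        _ = (∫⁻ r, F n r ^ 2 ∂Q) * A := by
            have hmd : Measurable fun q => ∫⁻ r, d r q ^ 2 ∂Q :=
              Measurable.lintegral_prod_right'
                ((hmeas.comp (measurable_snd.prodMk measurable_fst)).pow_const 2)
            rw [lintegral_const_mul _ hmd]
        _ ≤ A ^ (n + 1) * A := mul_le_mul_left ih A
        _ = A ^ (n + 2) := by ring
  have h := key n
  calc (∫⁻ q, F n q ^ 2 ∂Q) ^ (1/2 : ℝ) ≤ (A ^ (n+1)) ^ (1/2 : ℝ) :=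
        ENNReal.rpow_le_rpow h (by norm_num)
    _ = (A ^ (1/2 : ℝ)) ^ (n + 1) := by
        rw [← ENNReal.rpow_natCast A (n+1), ← ENNReal.rpow_mul, mul_comm,
          ENNReal.rpow_mul, ENNReal.rpow_natCast]
end

section
/- Let M be a measurable space equipped with a probability measure Q, and let d : M × M → [0,∞] be a measurable symmetric function. Define the iterated kernels by d⁽¹⁾ := d and d⁽ⁿ⁺¹⁾(p,q) := ∫ d⁽ⁿ⁾(p,r) d(r,q) Q(dr), and set ‖L‖_{1,1} := ∬ L(p,q) Q(dp) Q(dq) and ‖L‖_{2,2} := ( ∬ L(p,q)² Q(dp) Q(dq) )^{1/2}. If t ≥ 0 satisfies t · ‖d‖_{2,2} < 1, then the series ∑_{n≥1} tⁿ ‖d⁽ⁿ⁾‖_{1,1} converges (is finite). -/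
open MeasureTheory
open scoped ENNReal

lemma g_meas {M : Type*} [MeasurableSpace M] (Q : Measure M)
    [SFinite Q] (d : M → M → ℝ≥0∞) (hmeas : Measurable (Function.uncurry d)) (n : ℕ) :
    Measurable (fun q => ∫⁻ p, iterK Q d n p q ∂Q) := by
  have h1 : Measurable (fun x : M × M => iterK Q d n x.2 x.1) :=
    (iterK_meas Q d hmeas n).comp (measurable_snd.prodMk measurable_fst)
  exact h1.lintegral_prod_right'

lemma dsq_meas {M : Type*} [MeasurableSpace M] (Q : Measure M)
    [SFinite Q] (d : M → M → ℝ≥0∞) (hmeas : Measurable (Function.uncurry d)) :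
    Measurable (fun q => ∫⁻ p, d p q ^ 2 ∂Q) := by
  have h1 : Measurable (fun x : M × M => d x.2 x.1 ^ 2) :=
    ((hmeas.comp (measurable_snd.prodMk measurable_fst))).pow measurable_const
  exact h1.lintegral_prod_right'

/-- If `t ≥ 0` satisfies `t · ‖d‖_{2,2} < 1`, then `∑_{n ≥ 1} tⁿ ‖d⁽ⁿ⁾‖_{1,1} < ∞`,
where `‖L‖_{1,1} = ∬ L dQ²` and `‖L‖_{2,2} = (∬ L² dQ²)^{1/2}`. -/
theorem stmt5 {M : Type*} [MeasurableSpace M] (Q : Measure M) [IsProbabilityMeasure Q]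
    (d : M → M → ℝ≥0∞) (hmeas : Measurable (Function.uncurry d))
    (hsym : ∀ p q, d p q = d q p)
    (t : ℝ) (ht : 0 ≤ t)
    (hlt : ENNReal.ofReal t * (∫⁻ q, ∫⁻ p, (d p q) ^ 2 ∂Q ∂Q) ^ (1 / 2 : ℝ) < 1) :
    ∑' n : ℕ, ENNReal.ofReal t ^ (n + 1) * ∫⁻ q, ∫⁻ p, iterK Q d n p q ∂Q ∂Q < ⊤ := by
  set S : ℝ≥0∞ := ∫⁻ q, ∫⁻ p, (d p q) ^ 2 ∂Q ∂Q with hS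
  set K : ℝ≥0∞ := S ^ (1 / 2 : ℝ) with hK
  set g : ℕ → M → ℝ≥0∞ := fun n q => ∫⁻ p, iterK Q d n p q ∂Q with hg
  have h22 : Real.HolderConjugate 2 2 := Real.HolderConjugate.two_two
  have hpow : ∀ x : ℝ≥0∞, x ^ (2 : ℝ) = x ^ 2 := fun x => by
    rw [← ENNReal.rpow_natCast x 2]; norm_num
  -- Cauchy-Schwarz with constant 1 against a probability measure:
  have hCS1 : ∀ (f : M → ℝ≥0∞), AEMeasurable f Q →
      (∫⁻ q, f q ∂Q) ≤ (∫⁻ q, f q ^ 2 ∂Q) ^ (1 / 2 : ℝ) := by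
    intro f hf
    have := ENNReal.lintegral_mul_le_Lp_mul_Lq Q h22 hf
      (aemeasurable_const (b := (1 : ℝ≥0∞)))
    simpa [hpow, measure_univ] using this
  have hgsucc : ∀ n q, g (n+1) q = ∫⁻ r, g n r * d r q ∂Q := by
    intro n q
    have hm : Measurable (fun x : M × M => iterK Q d n x.1 x.2 * d x.2 q) := by
      apply Measurable.mul
      · exact iterK_meas Q d hmeas n
      · exact (hmeas.of_uncurry_right (y := q)).comp measurable_snd
    calc g (n+1) q = ∫⁻ p, ∫⁻ r, iterK Q d n p r * d r q ∂Q ∂Q := rfl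
      _ = ∫⁻ r, ∫⁻ p, iterK Q d n p r * d r q ∂Q ∂Q :=
          lintegral_lintegral_swap hm.aemeasurable
      _ = ∫⁻ r, g n r * d r q ∂Q := by
          refine lintegral_congr fun r => ?_
          rw [hg]; simp only
          rw [lintegral_mul_const _
            ((iterK_meas Q d hmeas n).of_uncurry_right (y := r))]
  have hAle : ∀ n, (∫⁻ q, g n q ^ 2 ∂Q) ^ (1 / 2 : ℝ) ≤ K ^ (n + 1) := by
    intro n
    induction n with
    | zero =>
      have h1 : ∀ q, g 0 q ^ 2 ≤ ∫⁻ p, d p q ^ 2 ∂Q := by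
        intro q
        have := hCS1 (fun p => d p q) (hmeas.of_uncurry_right).aemeasurable
        calc g 0 q ^ 2 ≤ ((∫⁻ p, d p q ^ 2 ∂Q) ^ (1 / 2 : ℝ)) ^ 2 := pow_le_pow_left' this 2
          _ = ∫⁻ p, d p q ^ 2 ∂Q := by
            rw [← hpow, ← ENNReal.rpow_mul]; norm_num
      have h2 : (∫⁻ q, g 0 q ^ 2 ∂Q) ≤ S := lintegral_mono h1
      calc (∫⁻ q, g 0 q ^ 2 ∂Q) ^ (1 / 2 : ℝ) ≤ S ^ (1 / 2 : ℝ) :=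
            ENNReal.rpow_le_rpow h2 (by norm_num)
        _ = K ^ (0 + 1) := by simp [hK]
    | succ n ih =>
      set A : ℝ≥0∞ := (∫⁻ q, g n q ^ 2 ∂Q) ^ (1 / 2 : ℝ) with hA
      have h1 : ∀ q, g (n+1) q ≤ A * (∫⁻ r, d r q ^ 2 ∂Q) ^ (1 / 2 : ℝ) := by
        intro q
        rw [hgsucc n q]
        have hgm : AEMeasurable (g n) Q := (g_meas Q d hmeas n).aemeasurable
        have hdm : AEMeasurable (fun r => d r q) Q := (hmeas.of_uncurry_right).aemeasurable
        have h := ENNReal.lintegral_mul_le_Lp_mul_Lq Q h22 hgm hdm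
        rw [hA]
        simpa [hpow] using h
      have h2 : (∫⁻ q, g (n+1) q ^ 2 ∂Q) ≤ A ^ 2 * S := by
        have h3 : ∀ q, g (n+1) q ^ 2 ≤ A ^ 2 * ∫⁻ r, d r q ^ 2 ∂Q := by
          intro q
          calc g (n+1) q ^ 2 ≤ (A * (∫⁻ r, d r q ^ 2 ∂Q) ^ (1 / 2 : ℝ)) ^ 2 :=
                pow_le_pow_left' (h1 q) 2
            _ = A ^ 2 * ∫⁻ r, d r q ^ 2 ∂Q := by
                rw [mul_pow, ← hpow ((∫⁻ r, d r q ^ 2 ∂Q) ^ (1 / 2 : ℝ)),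
                  ← ENNReal.rpow_mul]
                norm_num
        calc (∫⁻ q, g (n+1) q ^ 2 ∂Q) ≤ ∫⁻ q, A ^ 2 * ∫⁻ r, d r q ^ 2 ∂Q ∂Q :=
              lintegral_mono h3
          _ = A ^ 2 * S := by rw [lintegral_const_mul _ (dsq_meas Q d hmeas)]
      calc (∫⁻ q, g (n+1) q ^ 2 ∂Q) ^ (1 / 2 : ℝ) ≤ (A ^ 2 * S) ^ (1 / 2 : ℝ) :=
            ENNReal.rpow_le_rpow h2 (by norm_num)
        _ = A * K := by
            rw [ENNReal.mul_rpow_of_nonneg _ _ (by norm_num), ← hpow A,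
              ← ENNReal.rpow_mul, hK]
            norm_num
        _ ≤ K ^ (n + 1) * K := mul_le_mul_left ih K
        _ = K ^ (n + 1 + 1) := (pow_succ K (n+1)).symm
  have hInt : ∀ n, (∫⁻ q, g n q ∂Q) ≤ K ^ (n + 1) := fun n =>
    le_trans (hCS1 (g n) (g_meas Q d hmeas n).aemeasurable) (hAle n)
  set r : ℝ≥0∞ := ENNReal.ofReal t * K with hr
  have hterm : ∀ n : ℕ, ENNReal.ofReal t ^ (n + 1) * (∫⁻ q, ∫⁻ p, iterK Q d n p q ∂Q ∂Q)
      ≤ r ^ (n + 1) := by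
    intro n
    calc ENNReal.ofReal t ^ (n + 1) * (∫⁻ q, ∫⁻ p, iterK Q d n p q ∂Q ∂Q)
        ≤ ENNReal.ofReal t ^ (n + 1) * K ^ (n + 1) := mul_le_mul_right (hInt n) _
      _ = r ^ (n + 1) := (mul_pow _ _ _).symm
  have hrlt : r < 1 := hlt
  calc (∑' n : ℕ, ENNReal.ofReal t ^ (n + 1) * ∫⁻ q, ∫⁻ p, iterK Q d n p q ∂Q ∂Q)
      ≤ ∑' n : ℕ, r ^ (n + 1) := ENNReal.tsum_le_tsum hterm
    _ = r * ∑' n : ℕ, r ^ n := by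
        rw [← ENNReal.tsum_mul_left]; simp [pow_succ, mul_comm]
    _ = r * (1 - r)⁻¹ := by rw [ENNReal.tsum_geometric]
    _ < ⊤ := by
        apply ENNReal.mul_lt_top (lt_of_lt_of_le hrlt le_top)
        exact ENNReal.inv_lt_top.2 (tsub_pos_of_lt hrlt)
end

section
/- Let ε ∈ (0,1) and define d : (0,1) × (0,1) → [0,∞) by d(p,q) := max(p,q)^{−ε}. Let Q be Lebesgue measure on (0,1) and define the iterated kernels by d⁽¹⁾ := d and d⁽ⁿ⁺¹⁾(p,q) := ∫₀¹ d⁽ⁿ⁾(p,r) d(r,q) dr. Then there exists n ≥ 1 such that esssup_{p∈(0,1)} ∫₀¹ ( d⁽ⁿ⁾(p,q) )² dq < ∞. -/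
open MeasureTheory
open scoped ENNReal

lemma lint_rpow_lt_top {β : ℝ} (hβ : β < 1) :
    (∫⁻ r in Set.Ioo (0:ℝ) 1, ENNReal.ofReal (r ^ (-β)) ∂volume) < ⊤ := by
  have h1 : IntervalIntegrable (fun r : ℝ => r ^ (-β)) volume 0 1 :=
    intervalIntegral.intervalIntegrable_rpow' (by linarith)
  have h2 : IntegrableOn (fun r : ℝ => r ^ (-β)) (Set.Ioo (0:ℝ) 1) volume := by
    refine (intervalIntegrable_iff.mp h1).mono_set ?_
    rw [Set.uIoc_of_le (by norm_num : (0:ℝ) ≤ 1)]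
    exact Set.Ioo_subset_Ioc_self
  exact h2.setLIntegral_lt_top

lemma key (ε : ℝ) (hε : ε ∈ Set.Ioo (0 : ℝ) 1) (n : ℕ) :
    ∃ C : ℝ≥0∞, C ≠ ⊤ ∧ ∀ p ∈ Set.Ioo (0:ℝ) 1, ∀ q ∈ Set.Ioo (0:ℝ) 1,
      iterK (volume.restrict (Set.Ioo (0 : ℝ) 1))
          (fun p q => ENNReal.ofReal ((max p q) ^ (-ε))) n p q
        ≤ C * ENNReal.ofReal (q ^ (-(max (ε - n * ((1-ε)/2)) 0))) := by
  obtain ⟨hε0, hε1⟩ := hε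
  set δ : ℝ := (1-ε)/2 with hδ
  have hδ0 : 0 < δ := by rw [hδ]; linarith
  induction n with
  | zero =>
    refine ⟨1, ENNReal.one_ne_top, fun p hp q hq => ?_⟩
    rw [one_mul]
    push_cast
    rw [zero_mul, sub_zero, max_eq_left hε0.le]
    exact ENNReal.ofReal_le_ofReal
      (Real.rpow_le_rpow_of_nonpos hq.1 (le_max_right p q) (by linarith))
  | succ n ih =>
    obtain ⟨C, hC, hCle⟩ := ih
    set α : ℝ := max (ε - n * δ) 0 with hα
    have hα0 : 0 ≤ α := le_max_right _ _
    have hαε : α ≤ ε := by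
      apply max_le _ hε0.le
      nlinarith [hδ0.le, Nat.cast_nonneg (α := ℝ) n]
    set s : ℝ := min ε (1 - α - δ) with hs
    have hs0 : 0 ≤ s := le_min hε0.le (by
      have : α ≤ ε := hαε
      linarith [hδ0, this, hε1, (by linarith : δ = (1-ε)/2)])
    have hsε : s ≤ ε := min_le_left _ _
    have hαs : α + s < 1 := by
      have : s ≤ 1 - α - δ := min_le_right _ _
      linarith
    have hαnew : max (ε - (n+1 : ℕ) * δ) 0 = ε - s := by
      have h1 : ε - s = max (ε - (1 - α - δ)) 0 := by
        rcases le_total ε (1 - α - δ) with h | h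
        · rw [hs, min_eq_left h, max_eq_right (by linarith)]; ring
        · rw [hs, min_eq_right h, max_eq_left (by linarith)]
      rw [h1, hα]
      rcases le_total (ε - n * δ) 0 with h | h
      · rw [max_eq_right h]
        have : ε - (1 - 0 - δ) ≤ 0 := by linarith
        rw [max_eq_right this, max_eq_right (by push_cast; nlinarith)]
      · rw [max_eq_left h]
        have : ε - (1 - (ε - n * δ) - δ) = ε - (n+1:ℕ) * δ := by push_cast; ring
        rw [this]
    -- the integral constant
    have hI : (∫⁻ r in Set.Ioo (0:ℝ) 1, ENNReal.ofReal (r ^ (-(α + s))) ∂volume) < ⊤ :=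
      lint_rpow_lt_top hαs
    refine ⟨C * ∫⁻ r in Set.Ioo (0:ℝ) 1, ENNReal.ofReal (r ^ (-(α + s))) ∂volume,
      ENNReal.mul_ne_top hC hI.ne, fun p hp q hq => ?_⟩
    rw [hαnew]
    show (∫⁻ r, iterK _ _ n p r * ENNReal.ofReal ((max r q) ^ (-ε))
        ∂(volume.restrict (Set.Ioo (0:ℝ) 1))) ≤ _
    have hbound : ∀ r ∈ Set.Ioo (0:ℝ) 1,
        iterK (volume.restrict (Set.Ioo (0 : ℝ) 1))
          (fun p q => ENNReal.ofReal ((max p q) ^ (-ε))) n p r *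
          ENNReal.ofReal ((max r q) ^ (-ε))
        ≤ (C * ENNReal.ofReal (r ^ (-(α + s)))) * ENNReal.ofReal (q ^ (-(ε - s))) := by
      intro r hr
      have hmax : (max r q : ℝ) ^ (-ε) ≤ r ^ (-s) * q ^ (-(ε - s)) := by
        have hsplit : (max r q : ℝ) ^ (-ε) = (max r q) ^ (-s) * (max r q) ^ (-(ε - s)) := by
          rw [← Real.rpow_add (lt_of_lt_of_le hr.1 (le_max_left r q))]
          ring_nf
        rw [hsplit]
        have h1 : (max r q : ℝ) ^ (-s) ≤ r ^ (-s) :=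
          Real.rpow_le_rpow_of_nonpos hr.1 (le_max_left r q) (by linarith)
        have h2 : (max r q : ℝ) ^ (-(ε - s)) ≤ q ^ (-(ε - s)) :=
          Real.rpow_le_rpow_of_nonpos hq.1 (le_max_right r q) (by linarith)
        exact mul_le_mul h1 h2 (Real.rpow_nonneg (hr.1.le.trans (le_max_left r q)) _) (Real.rpow_nonneg hr.1.le _)
      calc iterK _ _ n p r * ENNReal.ofReal ((max r q) ^ (-ε))
          ≤ (C * ENNReal.ofReal (r ^ (-α))) * ENNReal.ofReal (r ^ (-s) * q ^ (-(ε - s))) := by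
            exact mul_le_mul' (hCle p hp r hr) (ENNReal.ofReal_le_ofReal hmax)
        _ = (C * ENNReal.ofReal (r ^ (-(α + s)))) * ENNReal.ofReal (q ^ (-(ε - s))) := by
            rw [ENNReal.ofReal_mul (Real.rpow_nonneg hr.1.le _), ← mul_assoc, mul_assoc C,
              ← ENNReal.ofReal_mul (Real.rpow_nonneg hr.1.le _),
              ← Real.rpow_add hr.1]
            ring_nf
    calc (∫⁻ r, _ ∂(volume.restrict (Set.Ioo (0:ℝ) 1)))
        ≤ ∫⁻ r in Set.Ioo (0:ℝ) 1,
            (C * ENNReal.ofReal (r ^ (-(α + s)))) * ENNReal.ofReal (q ^ (-(ε - s)))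
            ∂volume := by
          refine lintegral_mono_ae ?_
          filter_upwards [ae_restrict_mem measurableSet_Ioo] with r hr using hbound r hr
      _ = (C * ∫⁻ r in Set.Ioo (0:ℝ) 1, ENNReal.ofReal (r ^ (-(α + s))) ∂volume) *
            ENNReal.ofReal (q ^ (-(ε - s))) := by
          rw [lintegral_mul_const' _ _ (by simp), lintegral_const_mul' _ _ hC]

/-- For the max-kernel `d(p,q) = max(p,q)^{-ε}` on `(0,1)` with `ε ∈ (0,1)` and `Q`
Lebesgue measure on `(0,1)`, there exists `n ≥ 1` with `‖d⁽ⁿ⁾‖_{∞,2} < ∞`, i.e.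
`esssup_p ∫₀¹ d⁽ⁿ⁾(p,q)² dq < ∞`. -/
theorem stmt14 (ε : ℝ) (hε : ε ∈ Set.Ioo (0 : ℝ) 1) :
    ∃ n : ℕ,
      essSup
        (fun p : ℝ =>
          ∫⁻ q, (iterK (volume.restrict (Set.Ioo (0 : ℝ) 1))
              (fun p q => ENNReal.ofReal ((max p q) ^ (-ε))) n p q) ^ 2
            ∂(volume.restrict (Set.Ioo (0 : ℝ) 1)))
        (volume.restrict (Set.Ioo (0 : ℝ) 1)) < ⊤ := by
  obtain ⟨hε0, hε1⟩ := hε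
  set δ : ℝ := (1-ε)/2 with hδ
  have hδ0 : 0 < δ := by rw [hδ]; linarith
  obtain ⟨n, hn⟩ : ∃ n : ℕ, ε - n * δ ≤ 0 := by
    obtain ⟨n, hn⟩ := exists_nat_gt (ε / δ)
    exact ⟨n, by rw [div_lt_iff₀ hδ0] at hn; linarith⟩
  obtain ⟨C, hC, hCle⟩ := key ε ⟨hε0, hε1⟩ n
  have hα : max (ε - n * δ) 0 = 0 := max_eq_right hn
  have hbound : ∀ p ∈ Set.Ioo (0:ℝ) 1, ∀ q ∈ Set.Ioo (0:ℝ) 1,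
      iterK (volume.restrict (Set.Ioo (0 : ℝ) 1))
        (fun p q => ENNReal.ofReal ((max p q) ^ (-ε))) n p q ≤ C := by
    intro p hp q hq
    have := hCle p hp q hq
    rwa [hα, neg_zero, Real.rpow_zero, ENNReal.ofReal_one, mul_one] at this
  refine ⟨n, lt_of_le_of_lt (essSup_le_of_ae_le (C ^ 2) ?_) ?_⟩
  · filter_upwards [ae_restrict_mem measurableSet_Ioo] with p hp
    calc (∫⁻ q, _ ∂(volume.restrict (Set.Ioo (0:ℝ) 1)))
        ≤ ∫⁻ _ in Set.Ioo (0:ℝ) 1, C ^ 2 ∂volume := by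
          refine lintegral_mono_ae ?_
          filter_upwards [ae_restrict_mem measurableSet_Ioo] with q hq
          exact pow_le_pow_left' (hbound p hp q hq) 2
      _ = C ^ 2 * volume (Set.Ioo (0:ℝ) 1) := by rw [lintegral_const, Measure.restrict_apply_univ]
      _ ≤ C ^ 2 := by
          rw [Real.volume_Ioo]
          simp
  · exact ENNReal.pow_lt_top hC.lt_top
end

section
/- Let Δ ≥ 1 be a real number and let M : (0,1) → ℝ be differentiable and strictly increasing with strictly positive derivative, satisfying γ ≤ M(γ) < 1 for all γ ∈ (0,1), M(γ) → 0 as γ ↓ 0, and M(γ)/γ → ∞ as γ ↓ 0. Suppose the differential inequality M(γ) ≤ γ·M′(γ) + Δ·M(γ)² + (1−γ)·Δ²·M(γ)²·M′(γ) holds for every γ ∈ (0,1). Then M(γ) ≥ √( γ / (Δ + Δ²) ) for every γ ∈ (0,1); in particular M(γ) ≥ √(γ/2) / Δ. -/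
/-- Analytic core of the Aizenman–Barsky magnetization lower bound: if `Δ ≥ 1` and
`M : (0,1) → ℝ` is differentiable and strictly increasing with positive derivative `M'`,
satisfies `γ ≤ M(γ) < 1`, `M(γ) → 0` and `M(γ)/γ → ∞` as `γ ↓ 0`, and the differential
inequality `M ≤ γ M' + Δ M² + (1-γ) Δ² M² M'` holds on `(0,1)`, then
`M(γ) ≥ √(γ/(Δ+Δ²)) ≥ √(γ/2)/Δ` on `(0,1)`. -/
theorem stmt15 (Δ : ℝ) (hΔ : 1 ≤ Δ) (M M' : ℝ → ℝ)
    (hderiv : ∀ γ ∈ Set.Ioo (0 : ℝ) 1, HasDerivAt M (M' γ) γ)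
    (hpos : ∀ γ ∈ Set.Ioo (0 : ℝ) 1, 0 < M' γ)
    (hmono : StrictMonoOn M (Set.Ioo (0 : ℝ) 1))
    (hbound : ∀ γ ∈ Set.Ioo (0 : ℝ) 1, γ ≤ M γ ∧ M γ < 1)
    (hlim0 : Filter.Tendsto M (nhdsWithin 0 (Set.Ioi 0)) (nhds 0))
    (hlimratio : Filter.Tendsto (fun γ => M γ / γ) (nhdsWithin 0 (Set.Ioi 0))
      Filter.atTop)
    (hineq : ∀ γ ∈ Set.Ioo (0 : ℝ) 1,
      M γ ≤ γ * M' γ + Δ * (M γ) ^ 2 + (1 - γ) * Δ ^ 2 * (M γ) ^ 2 * M' γ) :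
    ∀ γ ∈ Set.Ioo (0 : ℝ) 1,
      Real.sqrt (γ / (Δ + Δ ^ 2)) ≤ M γ ∧ Real.sqrt (γ / 2) / Δ ≤ M γ := by
  have hΔ0 : (0:ℝ) < Δ := lt_of_lt_of_le one_pos hΔ
  have hMpos : ∀ γ ∈ Set.Ioo (0:ℝ) 1, 0 < M γ := fun γ hγ =>
    lt_of_lt_of_le hγ.1 (hbound γ hγ).1
  set f : ℝ → ℝ := fun γ => γ / M γ - Δ * γ - Δ ^ 2 * M γ with hfdef
  have hfd : ∀ γ ∈ Set.Ioo (0:ℝ) 1,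
      HasDerivAt f ((1 * M γ - γ * M' γ) / (M γ) ^ 2 - Δ * 1 - Δ ^ 2 * M' γ) γ := by
    intro γ hγ
    exact (((hasDerivAt_id γ).div (hderiv γ hγ) (hMpos γ hγ).ne').sub
      ((hasDerivAt_id γ).const_mul Δ)).sub ((hderiv γ hγ).const_mul (Δ ^ 2))
  have hderiv_nonpos : ∀ γ ∈ Set.Ioo (0:ℝ) 1,
      (1 * M γ - γ * M' γ) / (M γ) ^ 2 - Δ * 1 - Δ ^ 2 * M' γ ≤ 0 := by
    intro γ hγ
    have hM := hMpos γ hγ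
    have hdiv : (1 * M γ - γ * M' γ) / (M γ) ^ 2 ≤ Δ + Δ ^ 2 * M' γ := by
      rw [div_le_iff₀ (pow_pos hM 2)]
      nlinarith [hineq γ hγ,
        mul_nonneg (mul_nonneg (mul_nonneg hγ.1.le (sq_nonneg Δ)) (sq_nonneg (M γ)))
          (hpos γ hγ).le]
    linarith
  have hant : AntitoneOn f (Set.Ioo (0:ℝ) 1) := by
    apply antitoneOn_of_deriv_nonpos (convex_Ioo (0:ℝ) 1)
    · intro x hx
      exact ((hfd x hx).continuousAt).continuousWithinAt
    · rw [interior_Ioo]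
      exact fun x hx => ((hfd x hx).differentiableAt).differentiableWithinAt
    · rw [interior_Ioo]
      intro x hx
      rw [(hfd x hx).deriv]
      exact hderiv_nonpos x hx
  -- f tends to 0 at 0⁺
  have h1 : Filter.Tendsto (fun a => a / M a) (nhdsWithin 0 (Set.Ioi 0)) (nhds 0) := by
    have h := hlimratio.inv_tendsto_atTop
    simpa [Pi.inv_def, inv_div] using h
  have h2 : Filter.Tendsto (fun a : ℝ => Δ * a) (nhdsWithin 0 (Set.Ioi 0)) (nhds 0) := by
    have : Filter.Tendsto (fun a : ℝ => Δ * a) (nhds 0) (nhds (Δ * 0)) :=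
      (continuous_const.mul continuous_id).tendsto 0
    simpa using this.mono_left nhdsWithin_le_nhds
  have h3 : Filter.Tendsto (fun a : ℝ => Δ ^ 2 * M a)
      (nhdsWithin 0 (Set.Ioi 0)) (nhds 0) := by
    simpa using hlim0.const_mul (Δ ^ 2)
  have hflim : Filter.Tendsto f (nhdsWithin 0 (Set.Ioi 0)) (nhds 0) := by
    have := (h1.sub h2).sub h3
    simpa using this
  intro γ hγ
  have hM := hMpos γ hγ
  have hfle : f γ ≤ 0 := by
    refine ge_of_tendsto hflim ?_
    filter_upwards [Ioo_mem_nhdsGT_of_mem ⟨le_refl (0:ℝ), hγ.1⟩] with a ha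
    exact hant ⟨ha.1, ha.2.trans hγ.2⟩ hγ ha.2.le
  have h4 : γ / M γ ≤ Δ * γ + Δ ^ 2 * M γ := by
    have : γ / M γ - Δ * γ - Δ ^ 2 * M γ ≤ 0 := hfle
    linarith
  have h5 : γ ≤ (Δ * γ + Δ ^ 2 * M γ) * M γ := (div_le_iff₀ hM).mp h4
  have key : γ ≤ (Δ + Δ ^ 2) * (M γ) ^ 2 := by
    nlinarith [mul_le_mul_of_nonneg_right
      (mul_le_mul_of_nonneg_left (hbound γ hγ).1 hΔ0.le) hM.le]
  have hcpos : (0:ℝ) < Δ + Δ ^ 2 := by positivity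
  have hsq : γ / (Δ + Δ ^ 2) ≤ (M γ) ^ 2 := by
    rw [div_le_iff₀ hcpos]
    nlinarith [key]
  have h6 : Real.sqrt (γ / (Δ + Δ ^ 2)) ≤ M γ := by
    calc Real.sqrt (γ / (Δ + Δ ^ 2)) ≤ Real.sqrt ((M γ) ^ 2) := Real.sqrt_le_sqrt hsq
    _ = M γ := Real.sqrt_sq hM.le
  refine ⟨h6, le_trans ?_ h6⟩
  have heq : Real.sqrt (γ / 2) / Δ = Real.sqrt ((γ / 2) / Δ ^ 2) := by
    rw [Real.sqrt_div (by linarith [hγ.1.le] : (0:ℝ) ≤ γ / 2), Real.sqrt_sq hΔ0.le]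
  rw [heq]
  apply Real.sqrt_le_sqrt
  rw [show (γ / 2) / Δ ^ 2 = γ / (2 * Δ ^ 2) by ring]
  apply div_le_div_of_nonneg_left hγ.1.le hcpos
  nlinarith
end

section
/- Let Δ ≥ 1 and 0 < t₀ < t₁ be real numbers. Let M : [t₀,t₁] × (0,1) → ℝ take values in (0,1], be nondecreasing in each variable, and be continuously differentiable (both partial derivatives ∂_t M and ∂_γ M exist and are continuous on [t₀,t₁] × (0,1)). Assume: (i) for all (t,γ) ∈ [t₀,t₁] × (0,1), 1/γ ≤ ∂_γ M(t,γ)/M(t,γ) + (Δ/γ)·( M(t,γ) + t·∂_t M(t,γ) ); and (ii) M(t₀,γ) ≥ √(γ/2)/Δ for all γ ∈ (0,1). Then M(t₁,γ) ≥ (t₁ − t₀)/(2·t₁·Δ) for every γ ∈ (0,1). -/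
/-- Analytic core of the percolation mean-field lower bound. Let `Δ ≥ 1`,
`0 < t₀ < t₁`, and let `M : [t₀,t₁] × (0,1) → (0,1]` be nondecreasing in each variable
and continuously differentiable with partial derivatives `Mt` (in `t`) and `Mγ`
(in `γ`). If `1/γ ≤ Mγ/M + (Δ/γ)(M + t ∂ₜM)` on `[t₀,t₁] × (0,1)` and
`M(t₀,γ) ≥ √(γ/2)/Δ` for all `γ ∈ (0,1)`, then
`M(t₁,γ) ≥ (t₁ - t₀)/(2 t₁ Δ)` for every `γ ∈ (0,1)`. -/
theorem stmt16 (Δ t₀ t₁ : ℝ) (hΔ : 1 ≤ Δ) (ht₀ : 0 < t₀) (ht : t₀ < t₁)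
    (M Mt Mγ : ℝ → ℝ → ℝ)
    (hval : ∀ t ∈ Set.Icc t₀ t₁, ∀ γ ∈ Set.Ioo (0 : ℝ) 1, M t γ ∈ Set.Ioc (0 : ℝ) 1)
    (hmono_t : ∀ γ ∈ Set.Ioo (0 : ℝ) 1, MonotoneOn (fun t => M t γ) (Set.Icc t₀ t₁))
    (hmono_γ : ∀ t ∈ Set.Icc t₀ t₁, MonotoneOn (fun γ => M t γ) (Set.Ioo (0 : ℝ) 1))
    (hdt : ∀ t ∈ Set.Icc t₀ t₁, ∀ γ ∈ Set.Ioo (0 : ℝ) 1,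
      HasDerivAt (fun s => M s γ) (Mt t γ) t)
    (hdγ : ∀ t ∈ Set.Icc t₀ t₁, ∀ γ ∈ Set.Ioo (0 : ℝ) 1,
      HasDerivAt (fun g => M t g) (Mγ t γ) γ)
    (hct : ContinuousOn (fun z : ℝ × ℝ => Mt z.1 z.2)
      (Set.Icc t₀ t₁ ×ˢ Set.Ioo (0 : ℝ) 1))
    (hcγ : ContinuousOn (fun z : ℝ × ℝ => Mγ z.1 z.2)
      (Set.Icc t₀ t₁ ×ˢ Set.Ioo (0 : ℝ) 1))
    (hineq : ∀ t ∈ Set.Icc t₀ t₁, ∀ γ ∈ Set.Ioo (0 : ℝ) 1,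
      1 / γ ≤ Mγ t γ / M t γ + (Δ / γ) * (M t γ + t * Mt t γ))
    (hlow : ∀ γ ∈ Set.Ioo (0 : ℝ) 1, Real.sqrt (γ / 2) / Δ ≤ M t₀ γ) :
    ∀ γ ∈ Set.Ioo (0 : ℝ) 1, (t₁ - t₀) / (2 * t₁ * Δ) ≤ M t₁ γ := by
  intro γ₂ hγ₂
  by_contra hcon
  push_neg at hcon
  obtain ⟨hγ₂0, hγ₂1⟩ := hγ₂
  have hγ₂' : γ₂ ∈ Set.Ioo (0:ℝ) 1 := ⟨hγ₂0, hγ₂1⟩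
  have ht₁ : 0 < t₁ := ht₀.trans ht
  have hΔ0 : (0:ℝ) < Δ := lt_of_lt_of_le one_pos hΔ
  have ht₀Icc : t₀ ∈ Set.Icc t₀ t₁ := ⟨le_refl _, ht.le⟩
  have ht₁Icc : t₁ ∈ Set.Icc t₀ t₁ := ⟨ht.le, le_refl _⟩
  have huIcc : Set.uIcc t₀ t₁ = Set.Icc t₀ t₁ := Set.uIcc_of_le ht.le
  have huIoc : Set.uIoc t₀ t₁ = Set.Ioc t₀ t₁ := Set.uIoc_of_le ht.le
  have hM0 : ∀ t ∈ Set.Icc t₀ t₁, ∀ γ ∈ Set.Ioo (0:ℝ) 1, 0 < M t γ :=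
    fun t ht' γ hγ => (hval t ht' γ hγ).1
  have hM1 : ∀ t ∈ Set.Icc t₀ t₁, ∀ γ ∈ Set.Ioo (0:ℝ) 1, M t γ ≤ 1 :=
    fun t ht' γ hγ => (hval t ht' γ hγ).2
  have hMcont : ∀ γ ∈ Set.Ioo (0:ℝ) 1, ContinuousOn (fun t => M t γ) (Set.Icc t₀ t₁) :=
    fun γ hγ t ht' => (hdt t ht' γ hγ).continuousAt.continuousWithinAt
  have hMtcont : ∀ γ ∈ Set.Ioo (0:ℝ) 1, ContinuousOn (fun t => Mt t γ) (Set.Icc t₀ t₁) := by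
    intro γ hγ
    exact hct.comp ((continuous_id.prodMk continuous_const).continuousOn)
      (fun t ht' => Set.mk_mem_prod ht' hγ)
  have hMγcont : ∀ γ ∈ Set.Ioo (0:ℝ) 1, ContinuousOn (fun t => Mγ t γ) (Set.Icc t₀ t₁) := by
    intro γ hγ
    exact hcγ.comp ((continuous_id.prodMk continuous_const).continuousOn)
      (fun t ht' => Set.mk_mem_prod ht' hγ)
  -- Key lemma A : integrate the differential inequality in t.
  have keyA : ∀ γ ∈ Set.Ioo (0:ℝ) 1,
      (t₁ - t₀)/γ - (Δ/γ) * (t₁ * M t₁ γ - t₀ * M t₀ γ)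
        ≤ ∫ t in t₀..t₁, Mγ t γ / M t γ := by
    intro γ hγ
    have hγ0 := hγ.1
    have hint1 : IntervalIntegrable (fun t => M t γ + t * Mt t γ) MeasureTheory.volume t₀ t₁ := by
      apply ContinuousOn.intervalIntegrable
      rw [huIcc]
      exact (hMcont γ hγ).add (continuousOn_id.mul (hMtcont γ hγ))
    have hFTC : ∫ t in t₀..t₁, (M t γ + t * Mt t γ) = t₁ * M t₁ γ - t₀ * M t₀ γ := by
      have h := intervalIntegral.integral_eq_sub_of_hasDerivAt (f := fun t => t * M t γ)
        (f' := fun t => M t γ + t * Mt t γ) (a := t₀) (b := t₁) ?_ hint1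
      · simpa using h
      · intro t ht'
        have h2 := (hasDerivAt_id' (x := t)).mul (hdt t (huIcc ▸ ht') γ hγ)
        simpa [add_comm, Pi.mul_def] using h2
    have hintR : IntervalIntegrable (fun t => Mγ t γ / M t γ) MeasureTheory.volume t₀ t₁ := by
      apply ContinuousOn.intervalIntegrable
      rw [huIcc]
      exact (hMγcont γ hγ).div (hMcont γ hγ) (fun t ht' => (hM0 t ht' γ hγ).ne')
    have hintL : IntervalIntegrable (fun t => 1/γ - (Δ/γ) * (M t γ + t * Mt t γ))
        MeasureTheory.volume t₀ t₁ := intervalIntegrable_const.sub (hint1.const_mul _)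
    have hmono := intervalIntegral.integral_mono_on ht.le hintL hintR
      (fun t ht' => by have := hineq t ht' γ hγ; linarith)
    have hcomp : (∫ t in t₀..t₁, (1/γ - (Δ/γ) * (M t γ + t * Mt t γ)))
        = (t₁ - t₀) * (1/γ) - (Δ/γ) * (t₁ * M t₁ γ - t₀ * M t₀ γ) := by
      rw [intervalIntegral.integral_sub intervalIntegrable_const (hint1.const_mul _),
          intervalIntegral.integral_const, intervalIntegral.integral_const_mul, hFTC]
      simp [smul_eq_mul]
    rw [hcomp] at hmono
    have hrw : (t₁ - t₀)/γ = (t₁ - t₀) * (1/γ) := by ring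
    linarith [hmono, hrw.ge, hrw.le]
  -- Differentiation under the integral sign.
  have hFderiv : ∀ x₀ ∈ Set.Ioo (0:ℝ) 1,
      HasDerivAt (fun γ => ∫ t in t₀..t₁, Real.log (M t γ))
        (∫ t in t₀..t₁, Mγ t x₀ / M t x₀) x₀ := by
    intro x₀ hx₀
    obtain ⟨hx0, hx1⟩ := hx₀
    set a' : ℝ := x₀/2 with ha'def
    set b' : ℝ := (1 + x₀)/2 with hb'def
    have ha' : a' ∈ Set.Ioo (0:ℝ) 1 := ⟨by positivity, by rw [ha'def]; linarith⟩
    have hb' : b' ∈ Set.Ioo (0:ℝ) 1 := ⟨by rw [hb'def]; linarith, by rw [hb'def]; linarith⟩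
    set εr : ℝ := min (x₀/2) ((1 - x₀)/2) with hεdef
    have hε : 0 < εr := lt_min (by linarith) (by linarith)
    have hball : Metric.ball x₀ εr ⊆ Set.Icc a' b' := by
      intro x hx
      rw [Metric.mem_ball, Real.dist_eq, abs_lt] at hx
      have h1 : εr ≤ x₀/2 := min_le_left _ _
      have h2 : εr ≤ (1-x₀)/2 := min_le_right _ _
      constructor
      · rw [ha'def]; linarith [hx.1]
      · rw [hb'def]; linarith [hx.2]
    have hsub : Set.Icc a' b' ⊆ Set.Ioo (0:ℝ) 1 :=
      fun x hx => ⟨lt_of_lt_of_le ha'.1 hx.1, lt_of_le_of_lt hx.2 hb'.2⟩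
    obtain ⟨C, hC⟩ := (isCompact_Icc.prod isCompact_Icc).exists_bound_of_continuousOn
      (hcγ.mono (Set.prod_mono (le_refl (Set.Icc t₀ t₁)) hsub))
    have hm : 0 < M t₀ a' := hM0 t₀ ht₀Icc a' ha'
    have hMge : ∀ t ∈ Set.Icc t₀ t₁, ∀ x ∈ Set.Icc a' b', M t₀ a' ≤ M t x := by
      intro t ht' x hx
      have h1 : M t₀ a' ≤ M t₀ x := hmono_γ t₀ ht₀Icc ha' (hsub hx) hx.1
      have h2 : M t₀ x ≤ M t x := hmono_t x (hsub hx) ht₀Icc ht' ht'.1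
      linarith
    have hres := intervalIntegral.hasDerivAt_integral_of_dominated_loc_of_deriv_le
      (𝕜 := ℝ) (μ := MeasureTheory.volume) (F := fun x t => Real.log (M t x))
      (F' := fun x t => Mγ t x / M t x) (x₀ := x₀) (a := t₀) (b := t₁)
      (bound := fun _ => C / M t₀ a') (Metric.ball_mem_nhds x₀ hε) ?_ ?_ ?_ ?_ ?_ ?_
    · exact hres.2
    · filter_upwards [isOpen_Ioo.mem_nhds (⟨hx0, hx1⟩ : x₀ ∈ Set.Ioo (0:ℝ) 1)] with x hx
      apply ContinuousOn.aestronglyMeasurable _ measurableSet_uIoc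
      rw [huIoc]
      exact (((hMcont x hx).log (fun t ht' => (hM0 t ht' x hx).ne')).mono Set.Ioc_subset_Icc_self)
    · apply ContinuousOn.intervalIntegrable
      rw [huIcc]
      exact (hMcont x₀ ⟨hx0, hx1⟩).log (fun t ht' => (hM0 t ht' x₀ ⟨hx0, hx1⟩).ne')
    · apply ContinuousOn.aestronglyMeasurable _ measurableSet_uIoc
      rw [huIoc]
      exact (((hMγcont x₀ ⟨hx0, hx1⟩).div (hMcont x₀ ⟨hx0, hx1⟩)
        (fun t ht' => (hM0 t ht' x₀ ⟨hx0, hx1⟩).ne')).mono Set.Ioc_subset_Icc_self)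
    · apply MeasureTheory.ae_of_all
      intro t ht' x hx
      have htI : t ∈ Set.Icc t₀ t₁ := Set.Ioc_subset_Icc_self (huIoc ▸ ht')
      have hxI : x ∈ Set.Icc a' b' := hball hx
      have hxO : x ∈ Set.Ioo (0:ℝ) 1 := hsub hxI
      have h1 : ‖Mγ t x‖ ≤ C := hC (t, x) (Set.mk_mem_prod htI hxI)
      have h2 : M t₀ a' ≤ M t x := hMge t htI x hxI
      have hMx : 0 < M t x := hM0 t htI x hxO
      rw [norm_div, Real.norm_eq_abs (M t x), abs_of_pos hMx]
      exact div_le_div₀ (le_trans (norm_nonneg _) h1) h1 hm h2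
    · exact intervalIntegrable_const
    · apply MeasureTheory.ae_of_all
      intro t ht' x hx
      have htI : t ∈ Set.Icc t₀ t₁ := Set.Ioc_subset_Icc_self (huIoc ▸ ht')
      have hxO : x ∈ Set.Ioo (0:ℝ) 1 := hsub (hball hx)
      exact (hdγ t htI x hxO).log (hM0 t htI x hxO).ne'
  -- the constant c and the small γ₁
  set c : ℝ := t₁ - t₀ - Δ * t₁ * M t₁ γ₂ with hcdef
  have hc2 : (t₁ - t₀)/2 < c := by
    have h1 : Δ * t₁ * M t₁ γ₂ < Δ * t₁ * ((t₁-t₀)/(2*t₁*Δ)) :=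
      mul_lt_mul_of_pos_left hcon (by positivity)
    have h2 : Δ * t₁ * ((t₁-t₀)/(2*t₁*Δ)) = (t₁-t₀)/2 := by field_simp
    rw [h2] at h1
    rw [hcdef]; linarith
  set εc : ℝ := c - (t₁ - t₀)/2 with hεcdef
  have hεc : 0 < εc := by rw [hεcdef]; linarith
  set K : ℝ := (t₁ - t₀) * (Real.log Δ + Real.log 2 / 2) - c * Real.log γ₂ with hKdef
  set L : ℝ := max (K/εc + 1) (max 1 (1 - Real.log γ₂)) with hLdef
  have hL1 : (1:ℝ) ≤ L := le_trans (le_max_left 1 _) (le_max_right _ _)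
  have hLK : K/εc + 1 ≤ L := le_max_left _ _
  have hLγ : 1 - Real.log γ₂ ≤ L := le_trans (le_max_right 1 _) (le_max_right _ _)
  set γ₁ : ℝ := Real.exp (-L) with hγ₁def
  have hγ₁pos : 0 < γ₁ := Real.exp_pos _
  have hγ₁lt : γ₁ < γ₂ := by
    rw [hγ₁def]
    calc Real.exp (-L) < Real.exp (Real.log γ₂) := Real.exp_lt_exp.mpr (by linarith)
    _ = γ₂ := Real.exp_log hγ₂0
  have hγ₁1 : γ₁ < 1 := lt_trans hγ₁lt hγ₂1
  have hγ₁mem : γ₁ ∈ Set.Ioo (0:ℝ) 1 := ⟨hγ₁pos, hγ₁1⟩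
  have hIccsub : Set.Icc γ₁ γ₂ ⊆ Set.Ioo (0:ℝ) 1 :=
    fun x hx => ⟨lt_of_lt_of_le hγ₁pos hx.1, lt_of_le_of_lt hx.2 hγ₂1⟩
  -- monotonicity of γ ↦ F γ - c log γ
  have hGd : ∀ x ∈ Set.Icc γ₁ γ₂,
      HasDerivAt (fun x => (∫ t in t₀..t₁, Real.log (M t x)) - c * Real.log x)
        ((∫ t in t₀..t₁, Mγ t x / M t x) - c * x⁻¹) x := by
    intro x hx
    exact (hFderiv x (hIccsub hx)).sub ((Real.hasDerivAt_log (hIccsub hx).1.ne').const_mul c)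
  have hGmono : MonotoneOn (fun x => (∫ t in t₀..t₁, Real.log (M t x)) - c * Real.log x)
      (Set.Icc γ₁ γ₂) := by
    apply monotoneOn_of_deriv_nonneg (convex_Icc _ _)
    · exact fun x hx => (hGd x hx).continuousAt.continuousWithinAt
    · intro x hx
      exact ((hGd x (interior_subset hx)).differentiableAt).differentiableWithinAt
    · intro x hx
      have hx' : x ∈ Set.Icc γ₁ γ₂ := interior_subset hx
      have hxO := hIccsub hx'
      rw [(hGd x hx').deriv]
      have hA := keyA x hxO
      have hmon : M t₁ x ≤ M t₁ γ₂ := hmono_γ t₁ ht₁Icc hxO hγ₂' hx'.2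
      have hM₀pos : 0 < M t₀ x := hM0 t₀ ht₀Icc x hxO
      have hxpos : 0 < x := hxO.1
      have h1 : (Δ/x) * (t₁ * M t₁ x - t₀ * M t₀ x) ≤ (Δ/x) * (t₁ * M t₁ γ₂) := by
        apply mul_le_mul_of_nonneg_left _ (by positivity)
        nlinarith
      have h2 : c * x⁻¹ = (t₁-t₀)/x - (Δ/x)*(t₁ * M t₁ γ₂) := by
        rw [hcdef]; field_simp
      linarith
  have hγ₁Icc : γ₁ ∈ Set.Icc γ₁ γ₂ := ⟨le_refl _, hγ₁lt.le⟩
  have hγ₂Icc : γ₂ ∈ Set.Icc γ₁ γ₂ := ⟨hγ₁lt.le, le_refl _⟩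
  have hG := hGmono hγ₁Icc hγ₂Icc hγ₁lt.le
  simp only at hG
  -- F γ₂ ≤ 0
  have hint2 : IntervalIntegrable (fun t => Real.log (M t γ₂)) MeasureTheory.volume t₀ t₁ := by
    apply ContinuousOn.intervalIntegrable
    rw [huIcc]
    exact (hMcont γ₂ hγ₂').log (fun t ht' => (hM0 t ht' γ₂ hγ₂').ne')
  have hF2 : (∫ t in t₀..t₁, Real.log (M t γ₂)) ≤ 0 := by
    have h := intervalIntegral.integral_mono_on (f := fun t => Real.log (M t γ₂))
      (g := fun _ => (0:ℝ)) ht.le hint2 intervalIntegrable_const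
      (fun t ht' => Real.log_nonpos (hM0 t ht' γ₂ hγ₂').le (hM1 t ht' γ₂ hγ₂'))
    simpa using h
  -- F γ₁ ≥ (t₁-t₀) * log (√(γ₁/2)/Δ)
  have hint1' : IntervalIntegrable (fun t => Real.log (M t γ₁)) MeasureTheory.volume t₀ t₁ := by
    apply ContinuousOn.intervalIntegrable
    rw [huIcc]
    exact (hMcont γ₁ hγ₁mem).log (fun t ht' => (hM0 t ht' γ₁ hγ₁mem).ne')
  have hBpos : 0 < Real.sqrt (γ₁/2)/Δ := by positivity
  have hF1 : (t₁ - t₀) * Real.log (Real.sqrt (γ₁/2)/Δ) ≤ ∫ t in t₀..t₁, Real.log (M t γ₁) := by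
    have h := intervalIntegral.integral_mono_on (f := fun _ => Real.log (Real.sqrt (γ₁/2)/Δ))
      (g := fun t => Real.log (M t γ₁)) ht.le intervalIntegrable_const hint1'
      (fun t ht' => Real.log_le_log hBpos
        (le_trans (hlow γ₁ hγ₁mem) (hmono_t γ₁ hγ₁mem ht₀Icc ht' ht'.1)))
    simpa [smul_eq_mul] using h
  have hBval : Real.log (Real.sqrt (γ₁/2)/Δ) = (-L - Real.log 2)/2 - Real.log Δ := by
    rw [Real.log_div (Real.sqrt_ne_zero'.mpr (by positivity)) (ne_of_gt hΔ0),
        Real.log_sqrt (by positivity), Real.log_div (ne_of_gt hγ₁pos) two_ne_zero,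
        hγ₁def, Real.log_exp]
  have hlog1 : Real.log γ₁ = -L := by rw [hγ₁def, Real.log_exp]
  rw [hlog1] at hG
  rw [hBval] at hF1
  -- final contradiction
  clear_value c εc K L γ₁
  have hfin1 : εc * L ≤ K := by
    rw [hεcdef, hKdef]
    nlinarith [hF1, hF2, hG]
  have hfin2 : K + εc ≤ εc * L := by
    have h := mul_le_mul_of_nonneg_left hLK hεc.le
    have heq : εc * (K/εc + 1) = K + εc := by field_simp
    linarith
  linarith
end
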